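/- Let N ⊆ B_β \ {V} be a nested set with respect to the building set B_β \ {V}: for every subset A of N with at least two elements whose members are pairwise incomparable under inclusion, the union ⋃A is a proper subset of V and ⋃A ∉ B_β. If β ⊆ N and |N| = n, then the members of N are pairwise comparable under inclusion; consequently N can be written as a chain T_1 ⊊ T_2 ⊊ … ⊊ T_n of nonempty proper subsets of V with |T_j| = j for every j (i.e., N is a maximal 0-nested set). -/

import Mathlib

/-- a nested set `N ⊆ B_β \ {V}` with respect to the building set
`B_β \ {V}` which contains `β` and has `n` elements is a chain
`T_1 ⊊ T_2 ⊊ … ⊊ T_n` of nonempty proper subsets of `V` with `|T_j| = j`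
(i.e., a maximal 0-nested set). -/
theorem stmt_4 (n k l : ℕ) (hn : 2 ≤ n) (hk : 2 ≤ k) (hkl : k + l ≤ n)
    (i : Fin (k + l) → Fin (n + 1)) (hi : Function.Injective i)
    (S : Fin k → Finset (Fin (n + 1)))
    (hS : ∀ j : Fin k, S j =
      Finset.image i (Finset.univ.filter fun t : Fin (k + l) => (j : ℕ) ≤ (t : ℕ)))
    (β : Finset (Finset (Fin (n + 1)))) (hβ : β = Finset.image S Finset.univ)
    (βmin βmax : Finset (Fin (n + 1)))
    (hβmin : βmin =
      Finset.image i (Finset.univ.filter fun t : Fin (k + l) => k - 1 ≤ (t : ℕ)))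
    (hβmax : βmax = Finset.image i Finset.univ)
    (Bβ : Finset (Finset (Fin (n + 1))))
    (hBβ : ∀ B : Finset (Fin (n + 1)), B ∈ Bβ ↔
      ((B.Nonempty ∧ (B ∈ β ∨ B ⊂ βmin ∨ βmax ⊂ B)) ∨ ∃ v : Fin (n + 1), B = {v}))
    (N : Finset (Finset (Fin (n + 1))))
    (hNsub : N ⊆ Bβ.erase Finset.univ)
    (hNnested : ∀ A ⊆ N, 2 ≤ A.card →
      (∀ X ∈ A, ∀ Y ∈ A, X ≠ Y → ¬X ⊆ Y ∧ ¬Y ⊆ X) →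
      (A.sup id ⊂ Finset.univ ∧ A.sup id ∉ Bβ))
    (hβN : β ⊆ N) (hNcard : N.card = n) :
    (∀ X ∈ N, ∀ Y ∈ N, X ⊆ Y ∨ Y ⊆ X) ∧
      ∃ T : Fin n → Finset (Fin (n + 1)),
        StrictMono T ∧ (∀ j : Fin n, (T j).card = (j : ℕ) + 1) ∧
        (∀ j : Fin n, (T j).Nonempty ∧ T j ≠ Finset.univ) ∧
        N = Finset.image T Finset.univ := by
  classical
  have hkpos : 0 < k := by omega
  have hklpos : 0 < k + l := by omega
  -- S is antitone
  have hSanti : ∀ (a b : Fin k), (a : ℕ) ≤ (b : ℕ) → S b ⊆ S a := by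
    intro a b hab x hx
    rw [hS] at hx ⊢
    simp only [Finset.mem_image, Finset.mem_filter, Finset.mem_univ, true_and] at hx ⊢
    obtain ⟨t, ht, rfl⟩ := hx
    exact ⟨t, le_trans hab ht, rfl⟩
  have hminmem : βmin = S ⟨k - 1, by omega⟩ := by rw [hβmin, hS]
  have hmaxmem : βmax = S ⟨0, hkpos⟩ := by
    rw [hβmax, hS]
    congr 1
    ext t
    simp
  have hβmem : ∀ j : Fin k, S j ∈ β := fun j => by
    rw [hβ]; exact Finset.mem_image_of_mem S (Finset.mem_univ j)
  have hβmaxN : βmax ∈ N := hβN (hmaxmem ▸ hβmem _)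
  have hminsubS : ∀ j : Fin k, βmin ⊆ S j := by
    intro j
    rw [hminmem]
    refine hSanti j ⟨k - 1, by omega⟩ ?_
    have := j.isLt
    show (j : ℕ) ≤ k - 1
    omega
  have hSsubmax : ∀ j : Fin k, S j ⊆ βmax := by
    intro j
    rw [hmaxmem]
    exact hSanti ⟨0, hkpos⟩ j (Nat.zero_le _)
  have hminsubmax : βmin ⊆ βmax := by
    rw [hmaxmem]
    exact hminsubS ⟨0, hkpos⟩
  -- nonemptiness and properness of members of N
  have hne : ∀ B ∈ N, B.Nonempty ∧ B ≠ Finset.univ := by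
    intro B hB
    have h1 := hNsub hB
    rw [Finset.mem_erase] at h1
    refine ⟨?_, h1.1⟩
    rcases (hBβ B).1 h1.2 with ⟨h, _⟩ | ⟨v, rfl⟩
    · exact h
    · exact ⟨v, Finset.mem_singleton_self v⟩
  -- nested condition applied to pairs
  have hpair : ∀ X ∈ N, ∀ Y ∈ N, ¬X ⊆ Y → ¬Y ⊆ X →
      (X ∪ Y ⊂ Finset.univ ∧ X ∪ Y ∉ Bβ) := by
    intro X hX Y hY hXY hYX
    have hne' : X ≠ Y := fun h => hXY (h ▸ subset_rfl)
    have hsubN : ({X, Y} : Finset (Finset (Fin (n + 1)))) ⊆ N := by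
      intro Z hZ
      simp only [Finset.mem_insert, Finset.mem_singleton] at hZ
      rcases hZ with rfl | rfl
      exacts [hX, hY]
    have hcard2 : 2 ≤ ({X, Y} : Finset (Finset (Fin (n + 1)))).card := by
      rw [Finset.card_pair hne']
    have hpw : ∀ Z ∈ ({X, Y} : Finset (Finset (Fin (n + 1)))),
        ∀ W ∈ ({X, Y} : Finset (Finset (Fin (n + 1)))), Z ≠ W → ¬Z ⊆ W ∧ ¬W ⊆ Z := by
      intro Z hZ W hW hZW
      simp only [Finset.mem_insert, Finset.mem_singleton] at hZ hW
      rcases hZ with rfl | rfl <;> rcases hW with rfl | rfl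
      · exact absurd rfl hZW
      · exact ⟨hXY, hYX⟩
      · exact ⟨hYX, hXY⟩
      · exact absurd rfl hZW
    have := hNnested {X, Y} hsubN hcard2 hpw
    have hsup : ({X, Y} : Finset (Finset (Fin (n + 1)))).sup id = X ∪ Y := by
      simp [Finset.sup_insert, Finset.sup_singleton]
    rw [hsup] at this
    exact this
  -- every singleton in N is contained in βmin
  have hsing : ∀ v : Fin (n + 1), {v} ∈ N → v ∈ βmin := by
    intro v hv
    by_contra hvmin
    by_cases hvmax : v ∈ βmax
    · rw [hβmax] at hvmax
      obtain ⟨t, -, rfl⟩ := Finset.mem_image.1 hvmax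
      have htlt : (t : ℕ) < k - 1 := by
        by_contra h
        apply hvmin
        rw [hβmin]
        exact Finset.mem_image.2 ⟨t, by simp; omega, rfl⟩
      have hm1 : (t : ℕ) + 1 < k := by omega
      set Y := S ⟨(t : ℕ) + 1, hm1⟩ with hYdef
      have hYN : Y ∈ N := hβN (hβmem _)
      have hvY : i t ∉ Y := by
        rw [hYdef, hS]
        simp only [Finset.mem_image, Finset.mem_filter, Finset.mem_univ, true_and]
        rintro ⟨t', ht', h⟩
        have h2 := hi h
        subst h2
        omega
      have hvsubY : ¬({i t} : Finset (Fin (n + 1))) ⊆ Y := by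
        simpa using hvY
      have hYv : ¬Y ⊆ {i t} := by
        intro h
        have hmem : i ⟨(t : ℕ) + 1, by omega⟩ ∈ Y := by
          rw [hYdef, hS]
          exact Finset.mem_image.2 ⟨⟨(t : ℕ) + 1, by omega⟩, by simp only [Finset.mem_filter, Finset.mem_univ, true_and, le_refl], rfl⟩
        have := h hmem
        rw [Finset.mem_singleton] at this
        have := hi this
        have : ((⟨(t : ℕ) + 1, by omega⟩ : Fin (k + l)) : ℕ) = (t : ℕ) := by rw [this]
        simp at this
      obtain ⟨hsub, hmem⟩ := hpair {i t} hv Y hYN hvsubY hYv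
      apply hmem
      rw [hBβ]
      left
      refine ⟨⟨i t, by simp⟩, Or.inl ?_⟩
      have heq : {i t} ∪ Y = S ⟨(t : ℕ), by omega⟩ := by
        ext x
        rw [hYdef, hS, hS]
        simp only [Finset.mem_union, Finset.mem_singleton, Finset.mem_image,
          Finset.mem_filter, Finset.mem_univ, true_and]
        constructor
        · rintro (rfl | ⟨t', ht', rfl⟩)
          · exact ⟨t, le_refl _, rfl⟩
          · exact ⟨t', by omega, rfl⟩
        · rintro ⟨t', ht', rfl⟩
          by_cases h' : (t' : ℕ) = (t : ℕ)
          · left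
            congr 1
            exact Fin.ext h'
          · right
            exact ⟨t', by omega, rfl⟩
      rw [heq]
      exact hβmem _
    · have hvm : ¬({v} : Finset (Fin (n + 1))) ⊆ βmax := by simpa using hvmax
      have hmv : ¬βmax ⊆ {v} := by
        intro h
        have h0 : i ⟨0, hklpos⟩ ∈ βmax := by
          rw [hβmax]; exact Finset.mem_image_of_mem i (Finset.mem_univ _)
        have h1 : i ⟨1, by omega⟩ ∈ βmax := by
          rw [hβmax]; exact Finset.mem_image_of_mem i (Finset.mem_univ _)
        have e0 := Finset.mem_singleton.1 (h h0)
        have e1 := Finset.mem_singleton.1 (h h1)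
        have := hi (e0.trans e1.symm)
        simp [Fin.ext_iff] at this
      obtain ⟨hsub, hmem⟩ := hpair {v} hv βmax hβmaxN hvm hmv
      apply hmem
      rw [hBβ]
      left
      refine ⟨⟨v, by simp⟩, Or.inr (Or.inr ?_)⟩
      refine Finset.ssubset_iff_subset_ne.2 ⟨Finset.subset_union_right, ?_⟩
      intro h
      apply hvmax
      rw [h]
      simp
  -- classification of members of N
  have hclass : ∀ B ∈ N, B ⊆ βmin ∨ (∃ j, B = S j) ∨ βmax ⊂ B := by
    intro B hB
    have h1 := hNsub hB
    rw [Finset.mem_erase] at h1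
    rcases (hBβ B).1 h1.2 with ⟨hBne, hc⟩ | ⟨v, rfl⟩
    · rcases hc with hc | hc | hc
      · right; left
        rw [hβ] at hc
        obtain ⟨j, -, rfl⟩ := Finset.mem_image.1 hc
        exact ⟨j, rfl⟩
      · left; exact hc.subset
      · right; right; exact hc
    · left
      simpa using hsing v hB
  -- pairwise comparability
  have hcomp : ∀ X ∈ N, ∀ Y ∈ N, X ⊆ Y ∨ Y ⊆ X := by
    intro X hX Y hY
    by_contra hcon
    push_neg at hcon
    obtain ⟨hXY, hYX⟩ := hcon
    obtain ⟨hsub, hmem⟩ := hpair X hX Y hY hXY hYX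
    have hXne := (hne X hX).1
    have huneN : (X ∪ Y).Nonempty := hXne.mono Finset.subset_union_left
    apply hmem
    rcases hclass X hX with hX1 | ⟨a, rfl⟩ | hX3 <;>
      rcases hclass Y hY with hY1 | ⟨b, rfl⟩ | hY3
    · -- both ⊆ βmin
      have hu : X ∪ Y ⊆ βmin := Finset.union_subset hX1 hY1
      rw [hBβ]
      left
      refine ⟨huneN, ?_⟩
      rcases hu.ssubset_or_eq with h | h
      · exact Or.inr (Or.inl h)
      · rw [h, hminmem]
        exact Or.inl (hβmem _)
    · exact absurd (hX1.trans (hminsubS b)) hXY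
    · exact absurd ((hX1.trans hminsubmax).trans hY3.subset) hXY
    · exact absurd (hY1.trans (hminsubS a)) hYX
    · rcases le_total (a : ℕ) (b : ℕ) with h | h
      · exact absurd (hSanti a b h) hYX
      · exact absurd (hSanti b a h) hXY
    · exact absurd ((hSsubmax a).trans hY3.subset) hXY
    · exact absurd ((hY1.trans hminsubmax).trans hX3.subset) hYX
    · exact absurd ((hSsubmax b).trans hX3.subset) hYX
    · -- both ⊃ βmax
      rw [hBβ]
      left
      refine ⟨huneN, Or.inr (Or.inr ?_)⟩
      exact hX3.trans_subset Finset.subset_union_left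
  refine ⟨hcomp, ?_⟩
  -- card is injective on N
  have hInj : Set.InjOn Finset.card (N : Set (Finset (Fin (n + 1)))) := by
    intro X hX Y hY hcard
    by_contra hXY
    rcases hcomp X hX Y hY with h | h
    · exact hXY (Finset.eq_of_subset_of_card_le h (le_of_eq hcard.symm))
    · exact hXY ((Finset.eq_of_subset_of_card_le h (le_of_eq hcard)).symm)
  have himage : N.image Finset.card = Finset.Icc 1 n := by
    apply Finset.eq_of_subset_of_card_le
    · intro c hc
      obtain ⟨B, hB, rfl⟩ := Finset.mem_image.1 hc
      obtain ⟨hBne, hBuniv⟩ := hne B hB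
      rw [Finset.mem_Icc]
      constructor
      · exact hBne.card_pos
      · have hss : B ⊂ Finset.univ := Finset.ssubset_univ_iff.2 hBuniv
        have := Finset.card_lt_card hss
        rw [Finset.card_univ, Fintype.card_fin] at this
        omega
    · rw [Nat.card_Icc, Finset.card_image_of_injOn hInj, hNcard]
      omega
  have hTex : ∀ j : Fin n, ∃ B, B ∈ N ∧ B.card = (j : ℕ) + 1 := by
    intro j
    have hj : (j : ℕ) + 1 ∈ Finset.Icc 1 n := by
      rw [Finset.mem_Icc]
      have := j.isLt
      omega
    rw [← himage] at hj
    obtain ⟨B, hB, hc⟩ := Finset.mem_image.1 hj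
    exact ⟨B, hB, hc⟩
  choose T hTN hTc using hTex
  have hTmono : StrictMono T := by
    intro a b hab
    have hcard : (T a).card < (T b).card := by
      rw [hTc, hTc]
      have : (a : ℕ) < (b : ℕ) := hab
      omega
    rcases hcomp _ (hTN a) _ (hTN b) with h | h
    · exact lt_of_le_of_ne h (fun he => by rw [he] at hcard; omega)
    · exact absurd (Finset.card_le_card h) (by omega)
  refine ⟨T, hTmono, hTc, fun j => hne _ (hTN j), ?_⟩
  symm
  apply Finset.eq_of_subset_of_card_le
  · intro B hB
    obtain ⟨j, -, rfl⟩ := Finset.mem_image.1 hB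
    exact hTN j
  · rw [hNcard, Finset.card_image_of_injective _ hTmono.injective, Finset.card_univ,
      Fintype.card_fin]
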